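/- Let F_m and F_n denote the free groups on Fin m and Fin n respectively. If 2 ≤ m ≤ n then F_m ⊑ F_n; conversely, for all m, n ≥ 1, if F_m ⊑ F_n then m ≤ n. -/

import Mathlib

set_option linter.unusedSectionVars false

/-- `G` preforms `H` (written `G ⊑ H` in the paper). -/
def Preforms (G : Type*) (H : Type*) [Group G] [Group H] : Prop :=
  ∃ (k : ℕ) (t : Fin k → H), Subgroup.closure (Set.range t) = ⊤ ∧
    ∀ R : ℕ, ∃ s : Fin k → G, Subgroup.closure (Set.range s) = ⊤ ∧
      ∀ w : FreeGroup (Fin k), (FreeGroup.toWord w).length ≤ R →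
        (FreeGroup.lift s w = 1 ↔ FreeGroup.lift t w = 1)
set_option maxHeartbeats 1000000
open List

namespace FG

variable {α : Type*} [DecidableEq α]

def IsRed (L : List (α × Bool)) : Prop :=
  List.IsChain (fun a b => ¬(a.1 = b.1 ∧ a.2 = !b.2)) L

theorem chain'_replicate_self {R : α → α → Prop} (x : α) (h : R x x) (a : ℕ) :
    List.IsChain R (List.replicate a x) := by
  induction a with
  | zero => exact List.isChain_nil
  | succ a ih =>
    rw [List.replicate_succ]
    cases a with
    | zero => exact List.isChain_singleton x
    | succ b => exact List.IsChain.cons_cons (by simpa [List.replicate_succ] using h) ih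

theorem isRed_replicate (x : α) (b : Bool) (a : ℕ) :
    IsRed (List.replicate a (x, b)) :=
  chain'_replicate_self _ (by simp) _

theorem mk_replicate_true (x : α) (a : ℕ) :
    FreeGroup.mk (List.replicate a (x, true)) = FreeGroup.of x ^ a := by
  rw [← FreeGroup.toWord_of_pow, FreeGroup.mk_toWord]

theorem invRev_replicate (x : α) (b : Bool) (a : ℕ) :
    FreeGroup.invRev (List.replicate a (x, b)) = List.replicate a (x, !b) := by
  simp [FreeGroup.invRev, List.reverse_replicate]

theorem mk_replicate_false (x : α) (a : ℕ) :
    FreeGroup.mk (List.replicate a (x, false)) = (FreeGroup.of x ^ a)⁻¹ := by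
  rw [← mk_replicate_true, FreeGroup.inv_mk, invRev_replicate]
  norm_num

theorem pow_inv_mul_pow (g : FreeGroup α) (k a : ℕ) :
    (g ^ k)⁻¹ * g ^ a = g ^ (a - k) * (g ^ (k - a))⁻¹ := by
  rcases le_total k a with h | h
  · obtain ⟨d, rfl⟩ : ∃ d, a = k + d := ⟨a - k, by omega⟩
    rw [pow_add, show k + d - k = d by omega, show k - (k + d) = 0 by omega]
    group
  · obtain ⟨d, rfl⟩ : ∃ d, k = a + d := ⟨k - a, by omega⟩
    rw [pow_add, show a - (a + d) = 0 by omega, show a + d - a = d by omega]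
    group

theorem IsRed.reduce_eq {L : List (α × Bool)} (h : IsRed L) : FreeGroup.reduce L = L := by
  induction L with
  | nil => rfl
  | cons x L ih =>
    rw [FreeGroup.reduce.cons, ih h.tail]
    cases L with
    | nil => rfl
    | cons y L' =>
      have hxy : ¬(x.1 = y.1 ∧ x.2 = !y.2) := (List.isChain_cons_cons.mp h).1
      simp only [hxy, if_false]

theorem IsRed.toWord_mk {L : List (α × Bool)} (h : IsRed L) :
    (FreeGroup.mk L).toWord = L := by
  rw [FreeGroup.toWord_mk, h.reduce_eq]

theorem IsRed.append_left {L₁ L₂ : List (α × Bool)} (h : IsRed (L₁ ++ L₂)) : IsRed L₁ :=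
  (List.isChain_append.mp h).1

theorem IsRed.append_right {L₁ L₂ : List (α × Bool)} (h : IsRed (L₁ ++ L₂)) : IsRed L₂ :=
  (List.isChain_append.mp h).2.1

/-- The key "leading cancellation" computation. -/
theorem lead (z : α) (k a : ℕ) (D : List (α × Bool))
    (hred : IsRed (List.replicate a (z, true) ++ D))
    (hD : ∀ y ∈ D.head?, y ≠ ((z, true) : α × Bool)) :
    ((FreeGroup.of z ^ k)⁻¹ *
        FreeGroup.mk (List.replicate a (z, true) ++ D)).toWord
      = List.replicate (a - k) (z, true) ++ List.replicate (k - a) (z, false) ++ D := by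
  have hel : (FreeGroup.of z ^ k)⁻¹ * FreeGroup.mk (List.replicate a (z, true) ++ D)
      = FreeGroup.mk (List.replicate (a - k) (z, true) ++ List.replicate (k - a) (z, false) ++ D) := by
    rw [← FreeGroup.mul_mk, ← FreeGroup.mul_mk, ← FreeGroup.mul_mk,
      mk_replicate_true, mk_replicate_true, mk_replicate_false, ← mul_assoc,
      ← pow_inv_mul_pow, mul_assoc]
  rw [hel]
  have hredD : IsRed D := (List.isChain_append.mp hred).2.1
  apply IsRed.toWord_mk
  unfold IsRed
  rw [List.append_assoc, List.isChain_append]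
  refine ⟨(isRed_replicate z true _), ?_, ?_⟩
  · rw [List.isChain_append]
    refine ⟨isRed_replicate z false _, hredD, ?_⟩
    intro x hx y hy
    rw [List.getLast?_replicate] at hx
    by_cases h0 : k - a = 0
    · simp [h0] at hx
    · simp only [h0, if_false, Option.mem_def, Option.some_inj] at hx
      subst hx
      intro ⟨h1, h2⟩
      exact hD y hy (by
        have : y.2 = true := by simpa using h2.symm
        cases y with
        | mk y1 y2 => simp_all)
  · intro x hx y hy
    rw [List.getLast?_replicate] at hx
    by_cases h0 : a - k = 0
    · simp [h0] at hx
    · simp only [h0, if_false, Option.mem_def, Option.some_inj] at hx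
      subst hx
      -- the next letter is either from the (k-a) replicate (impossible) or from D
      have hka : k - a = 0 := by omega
      rw [hka] at hy
      simp only [List.replicate_zero, List.nil_append] at hy
      -- y is the head of D; use hred's junction since a ≥ 1
      have ha : 1 ≤ a := by omega
      have := (List.isChain_append.mp hred).2.2
      have hx' : ((z, true) : α × Bool) ∈ (List.replicate a ((z, true) : α × Bool)).getLast? := by
        rw [List.getLast?_replicate]
        simp [show a ≠ 0 by omega]
      exact this _ hx' y hy


theorem isRed_reduce (L : List (α × Bool)) : IsRed (FreeGroup.reduce L) := by
  induction L with
  | nil => exact List.isChain_nil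
  | cons x L ih =>
    rw [FreeGroup.reduce.cons]
    rcases h : FreeGroup.reduce L with _ | ⟨hd, tl⟩
    · exact List.isChain_singleton x
    · rw [h] at ih
      by_cases hc : x.1 = hd.1 ∧ x.2 = !hd.2
      · simp only [hc, if_true]
        exact ih.tail
      · simp only [hc, if_false]
        exact ih.cons_cons hc

theorem isRed_toWord (x : FreeGroup α) : IsRed x.toWord := by
  rw [← FreeGroup.reduce_toWord]
  exact isRed_reduce _

theorem IsRed.invRev {L : List (α × Bool)} (h : IsRed L) : IsRed (FreeGroup.invRev L) := by
  have h2 := FreeGroup.reduce_invRev (w := L)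
  rw [h.reduce_eq] at h2
  rw [← h2]
  exact isRed_reduce _

theorem invRev_append (L₁ L₂ : List (α × Bool)) :
    FreeGroup.invRev (L₁ ++ L₂) = FreeGroup.invRev L₂ ++ FreeGroup.invRev L₁ := by
  simp [FreeGroup.invRev]

theorem toWord_eq_invRev_toWord_inv (x : FreeGroup α) :
    x.toWord = FreeGroup.invRev (x⁻¹).toWord := by
  rw [FreeGroup.toWord_inv, FreeGroup.invRev_invRev]

/-- The "trailing cancellation" computation, by symmetry from `lead`. -/
theorem trail (z : α) (k u : ℕ) (C : List (α × Bool))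
    (hred : IsRed (C ++ List.replicate u (z, false)))
    (hC : ∀ y ∈ C.getLast?, y ≠ ((z, false) : α × Bool)) :
    (FreeGroup.mk (C ++ List.replicate u (z, false)) * FreeGroup.of z ^ k).toWord
      = C ++ List.replicate (k - u) (z, true) ++ List.replicate (u - k) (z, false) := by
  set x := FreeGroup.mk (C ++ List.replicate u (z, false)) * FreeGroup.of z ^ k with hx
  have hxinv : x⁻¹ = (FreeGroup.of z ^ k)⁻¹ *
      FreeGroup.mk (List.replicate u (z, true) ++ FreeGroup.invRev C) := by
    rw [hx, mul_inv_rev, FreeGroup.inv_mk, invRev_append, invRev_replicate]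
    norm_num
  have hred' : IsRed (List.replicate u ((z, true) : α × Bool) ++ FreeGroup.invRev C) := by
    have := hred.invRev
    rwa [invRev_append, invRev_replicate] at this
  have hD' : ∀ y ∈ (FreeGroup.invRev C).head?, y ≠ ((z, true) : α × Bool) := by
    intro y hy
    unfold FreeGroup.invRev at hy
    rw [List.head?_reverse, List.getLast?_map] at hy
    rcases hmem : C.getLast? with _ | c
    · rw [hmem] at hy; simp at hy
    · rw [hmem] at hy
      simp only [Option.map_some, Option.mem_def, Option.some_inj] at hy
      subst hy
      have := hC c (by rw [hmem]; rfl)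
      intro hcontra
      apply this
      cases c with
      | mk c1 c2 =>
        simp only [Prod.mk.injEq] at hcontra ⊢
        exact ⟨hcontra.1, by simpa using congrArg Bool.not hcontra.2⟩
  have hlead := lead z k u (FreeGroup.invRev C) hred' hD'
  rw [← hxinv] at hlead
  rw [toWord_eq_invRev_toWord_inv x, hlead]
  rw [invRev_append, invRev_append, invRev_replicate, invRev_replicate,
    FreeGroup.invRev_invRev]
  simp only [Bool.not_true, Bool.not_false, List.append_assoc]


theorem split_lead (x : α × Bool) :
    ∀ L : List (α × Bool), ∃ a D, L = List.replicate a x ++ D ∧ ∀ y ∈ D.head?, y ≠ x := by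
  intro L
  induction L with
  | nil => exact ⟨0, [], rfl, by simp⟩
  | cons c L ih =>
    by_cases hc : c = x
    · obtain ⟨a, D, hL, hD⟩ := ih
      exact ⟨a + 1, D, by simp [hL, hc, List.replicate_succ], hD⟩
    · exact ⟨0, c :: L, rfl, by simpa using hc⟩

theorem split_trail (x : α × Bool) (L : List (α × Bool)) :
    ∃ a C, L = C ++ List.replicate a x ∧ ∀ y ∈ C.getLast?, y ≠ x := by
  obtain ⟨a, D, hL, hD⟩ := split_lead x L.reverse
  refine ⟨a, D.reverse, ?_, ?_⟩
  · have := congrArg List.reverse hL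
    simpa [List.reverse_replicate] using this
  · simpa [List.getLast?_reverse] using hD

theorem mk_singleton (x : α) (e : Bool) :
    FreeGroup.mk [(x, e)] = if e then FreeGroup.of x else (FreeGroup.of x)⁻¹ := by
  cases e
  · have := mk_replicate_false x 1
    simpa [List.replicate_one] using this
  · rfl

theorem hword (z : α) (N : ℕ) (ρ lam : ℕ) (v' : List (α × Bool))
    (hv : IsRed v') (hlen : v'.length < N)
    (hρ : N ∣ ρ) (hlam : N ∣ lam) (hlamN : N ≤ lam)
    (hcompat : ¬(v' = [] ∧ ρ = lam)) :
    ∃ M, ((FreeGroup.of z ^ ρ)⁻¹ * FreeGroup.mk v' * FreeGroup.of z ^ lam).toWord = M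
      ∧ M ≠ []
      ∧ (∀ l ∈ M, l.1 = z ∨ l ∈ v')
      ∧ (N ≤ ρ → ∃ σ M', M = (z, σ) :: M') := by
  obtain ⟨a, D, hsplit, hD⟩ := split_lead ((z, true) : α × Bool) v'
  have ha : a ≤ v'.length := by
    rw [hsplit]; simp
  have hlead := lead z ρ a D (by rw [← hsplit]; exact hv) hD
  rw [← hsplit] at hlead
  set Y : List (α × Bool) :=
    List.replicate (a - ρ) (z, true) ++ List.replicate (ρ - a) (z, false) ++ D with hY
  obtain ⟨u, C, hYsplit, hC⟩ := split_trail ((z, false) : α × Bool) Y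
  have hmkY : FreeGroup.mk Y = (FreeGroup.of z ^ ρ)⁻¹ * FreeGroup.mk v' := by
    rw [← hlead, FreeGroup.mk_toWord]
  have hredY : IsRed Y := by
    rw [← hlead]; exact isRed_toWord _
  have htrail := trail z lam u C (by rw [← hYsplit]; exact hredY) hC
  rw [← hYsplit, hmkY] at htrail
  have hMne : C ++ List.replicate (lam - u) ((z, true) : α × Bool)
      ++ List.replicate (u - lam) ((z, false) : α × Bool) ≠ [] := by
    intro hnil
    have hC0 : C = [] := by
      rcases C with _ | _
      · rfl
      · simp at hnil
    have h1 : lam - u = 0 := by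
      have := congrArg List.length hnil
      simp only [List.length_append, List.length_replicate, List.length_nil] at this
      omega
    have h2 : u - lam = 0 := by
      have := congrArg List.length hnil
      simp only [List.length_append, List.length_replicate, List.length_nil] at this
      omega
    have hulam : u = lam := by
      have hu : u ≤ Y.length := by rw [hYsplit]; simp
      omega
    have hYval : Y = List.replicate u ((z, false) : α × Bool) := by
      rw [hYsplit, hC0, List.nil_append]
    have hv'eq : FreeGroup.mk v' = FreeGroup.of z ^ ρ * (FreeGroup.of z ^ lam)⁻¹ := by
      have h3 := hmkY
      rw [hYval, mk_replicate_false, hulam] at h3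
      have h4 := congrArg (fun w => FreeGroup.of z ^ ρ * w) h3
      simpa [mul_assoc] using h4.symm
    rcases eq_or_ne ρ lam with heq | hne
    · rw [heq] at hv'eq
      simp only [mul_inv_cancel] at hv'eq
      have : v' = [] := by
        have := congrArg FreeGroup.toWord hv'eq
        rwa [hv.toWord_mk, FreeGroup.toWord_one] at this
      exact hcompat ⟨this, heq⟩
    · have hnormle : (FreeGroup.mk v').norm ≤ v'.length := FreeGroup.norm_mk_le
      rcases lt_or_gt_of_ne hne with hlt | hgt
      · have heq2 : FreeGroup.mk v' = (FreeGroup.of z ^ (lam - ρ))⁻¹ := by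
          rw [hv'eq]
          obtain ⟨d, rfl⟩ : ∃ d, lam = ρ + d := ⟨lam - ρ, by omega⟩
          rw [pow_add, show ρ + d - ρ = d by omega]
          group
        have hnorm2 : (FreeGroup.mk v').norm = lam - ρ := by
          rw [heq2, FreeGroup.norm_inv_eq, FreeGroup.norm_of_pow]
        have hdvd : N ∣ (lam - ρ) := Nat.dvd_sub hlam hρ
        have : N ≤ lam - ρ := Nat.le_of_dvd (by omega) hdvd
        omega
      · have heq2 : FreeGroup.mk v' = FreeGroup.of z ^ (ρ - lam) := by
          rw [hv'eq]
          obtain ⟨d, rfl⟩ : ∃ d, ρ = lam + d := ⟨ρ - lam, by omega⟩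
          rw [pow_add, show lam + d - lam = d by omega]
          group
        have hnorm2 : (FreeGroup.mk v').norm = ρ - lam := by
          rw [heq2, FreeGroup.norm_of_pow]
        have hdvd : N ∣ (ρ - lam) := Nat.dvd_sub hρ hlam
        have : N ≤ ρ - lam := Nat.le_of_dvd (by omega) hdvd
        omega
  refine ⟨_, htrail, hMne, ?_, ?_⟩
  · -- letters
    intro l hl
    rcases List.mem_append.mp hl with hl1 | hl2
    · rcases List.mem_append.mp hl1 with hl3 | hl4
      · have : l ∈ Y := by rw [hYsplit]; exact List.mem_append_left _ hl3
        rw [hY] at this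
        rcases List.mem_append.mp this with h5 | h6
        · rcases List.mem_append.mp h5 with h7 | h8
          · left; exact congrArg Prod.fst (List.eq_of_mem_replicate h7)
          · left; exact congrArg Prod.fst (List.eq_of_mem_replicate h8)
        · right; rw [hsplit]; exact List.mem_append_right _ h6
      · left; exact congrArg Prod.fst (List.eq_of_mem_replicate hl4)
    · left; exact congrArg Prod.fst (List.eq_of_mem_replicate hl2)
  · -- head letter
    intro hNρ
    have haρ : a - ρ = 0 := by omega
    obtain ⟨e, he⟩ : ∃ e, ρ - a = e + 1 := ⟨ρ - a - 1, by omega⟩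
    cases C with
    | nil =>
      by_cases hul : 1 ≤ lam - u
      · obtain ⟨f, hf⟩ : ∃ f, lam - u = f + 1 := ⟨lam - u - 1, by omega⟩
        refine ⟨true, List.replicate f (z, true) ++ List.replicate (u - lam) (z, false), ?_⟩
        rw [hf]
        simp [List.replicate_succ]
      · have huf : 1 ≤ u - lam := by
          by_contra h
          apply hMne
          have h1 : lam - u = 0 := by omega
          have h2 : u - lam = 0 := by omega
          simp [h1, h2]
        obtain ⟨f, hf⟩ : ∃ f, u - lam = f + 1 := ⟨u - lam - 1, by omega⟩
        have h1 : lam - u = 0 := by omega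
        refine ⟨false, List.replicate f (z, false), ?_⟩
        rw [hf, h1]
        simp [List.replicate_succ]
    | cons c C' =>
      have hY2 : Y = List.replicate (ρ - a) ((z, false) : α × Bool) ++ D := by
        rw [hY, haρ]; simp
      have hhead : Y.head? = some ((z, false) : α × Bool) := by
        rw [hY2, he, List.replicate_succ]; rfl
      have hhead2 : Y.head? = some c := by rw [hYsplit]; rfl
      have hc : c = ((z, false) : α × Bool) := by
        rw [hhead] at hhead2; exact (Option.some_inj.mp hhead2).symm
      exact ⟨false, C' ++ List.replicate (lam - u) (z, true) ++ List.replicate (u - lam) (z, false),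
        by rw [hc]; simp⟩


/-! ### The concrete construction -/

section Construction

variable (m' n R : ℕ)

/-- the buffer letter -/
def zl : Fin (m' + 2) := ⟨0, by omega⟩
/-- the separator letter -/
def bl : Fin (m' + 2) := ⟨m' + 1, by omega⟩

/-- buffer unit -/
def Nb : ℕ := R + 1

def jj (i : Fin n) : ℕ := i.1 - (m' + 1)

def qq (i : Fin n) : ℕ := Nb R * (2 * jj m' n i + 1)

def qq' (i : Fin n) : ℕ := Nb R * (2 * jj m' n i + 2)

def lam (i : Fin n) (e : Bool) : ℕ := if e then qq m' n R i else qq' m' n R i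

def rho (i : Fin n) (e : Bool) : ℕ := if e then qq' m' n R i else qq m' n R i

/-- the generating tuple -/
def S : Fin n → FreeGroup (Fin (m' + 2)) := fun i =>
  if h : i.1 < m' + 1 then FreeGroup.of ⟨i.1, by omega⟩
  else FreeGroup.of (zl m') ^ qq m' n R i * FreeGroup.of (bl m') *
    (FreeGroup.of (zl m') ^ qq' m' n R i)⁻¹

/-- letter map on basis letters -/
def gmap (l : Fin n × Bool) : Fin (m' + 2) × Bool :=
  (⟨min l.1.1 (m' + 1), by omega⟩, l.2)

theorem zl_ne_bl : zl m' ≠ bl m' := by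
  simp [zl, bl, Fin.ext_iff]

theorem gmap_fst_ne_bl (l : Fin n × Bool) (hl : l.1.1 < m' + 1) :
    (gmap m' n l).1 ≠ bl m' := by
  intro h
  have h2 : min l.1.1 (m' + 1) = m' + 1 := congrArg Fin.val h
  omega

theorem split_block :
    ∀ w : List (Fin n × Bool), (∀ l ∈ w, l.1.1 < m' + 1) ∨
      ∃ v x w', w = v ++ x :: w' ∧ (∀ l ∈ v, l.1.1 < m' + 1) ∧ m' + 1 ≤ x.1.1 := by
  intro w
  induction w with
  | nil => left; simp
  | cons c w ih =>
    by_cases hc : c.1.1 < m' + 1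
    · rcases ih with h | ⟨v, x, w', hw, hv, hx⟩
      · left; intro l hl
        rcases List.mem_cons.mp hl with rfl | hl
        · exact hc
        · exact h l hl
      · right
        refine ⟨c :: v, x, w', by rw [hw]; rfl, ?_, hx⟩
        intro l hl
        rcases List.mem_cons.mp hl with rfl | hl
        · exact hc
        · exact hv l hl
    · right
      exact ⟨[], c, w, rfl, by simp, by omega⟩

theorem lift_basis (v : List (Fin n × Bool)) (hv : ∀ l ∈ v, l.1.1 < m' + 1) :
    FreeGroup.lift (S m' n R) (FreeGroup.mk v) = FreeGroup.mk (v.map (gmap m' n)) := by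
  induction v with
  | nil => simp [← FreeGroup.one_eq_mk]
  | cons l v ih =>
    obtain ⟨i, e⟩ := l
    have hl : i.1 < m' + 1 := hv (i, e) (List.mem_cons_self)
    have hrest := ih (fun x hx => hv x (List.mem_cons_of_mem _ hx))
    have h1 : FreeGroup.mk ((i, e) :: v) = FreeGroup.mk [(i, e)] * FreeGroup.mk v := by
      rw [FreeGroup.mul_mk]; rfl
    rw [h1, map_mul, hrest]
    have h2 : ((i, e) :: v).map (gmap m' n) = [gmap m' n (i, e)] ++ v.map (gmap m' n) := rfl
    rw [h2, ← FreeGroup.mul_mk]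
    congr 1
    have hS : S m' n R i = FreeGroup.of ⟨i.1, by omega⟩ := dif_pos hl
    have hfin : ((⟨min i.1 (m' + 1), by omega⟩ : Fin (m' + 2))) = (⟨i.1, by omega⟩ : Fin (m' + 2)) := by
      apply Fin.ext
      show min i.1 (m' + 1) = i.1
      omega
    cases e
    · rw [mk_singleton, mk_singleton]
      simp only [Bool.false_eq_true, if_false, map_inv, FreeGroup.lift_apply_of, hS, gmap, hfin]
    · rw [mk_singleton, mk_singleton]
      simp only [if_true, FreeGroup.lift_apply_of, hS, gmap, hfin]

theorem isRed_gmap (v : List (Fin n × Bool)) (hv : ∀ l ∈ v, l.1.1 < m' + 1)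
    (hred : IsRed v) : IsRed (v.map (gmap m' n)) := by
  induction v with
  | nil => exact List.isChain_nil
  | cons a v ih =>
    cases v with
    | nil => exact List.isChain_singleton _
    | cons b v2 =>
      have ha : a.1.1 < m' + 1 := hv a (List.mem_cons_self)
      have hb : b.1.1 < m' + 1 := hv b (List.mem_cons_of_mem _ (List.mem_cons_self))
      refine List.isChain_cons_cons.mpr ⟨?_, ih (fun x hx => hv x (List.mem_cons_of_mem _ hx)) hred.tail⟩
      have hab := (List.isChain_cons_cons.mp hred).1
      intro ⟨h1, h2⟩
      apply hab
      constructor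
      · have : min a.1.1 (m' + 1) = min b.1.1 (m' + 1) := by
          simpa [gmap, Fin.ext_iff] using h1
        apply Fin.ext
        omega
      · simpa [gmap] using h2

theorem lift_block (i : Fin n) (e : Bool) (hi : m' + 1 ≤ i.1) :
    FreeGroup.lift (S m' n R) (FreeGroup.mk [(i, e)]) =
      FreeGroup.of (zl m') ^ lam m' n R i e *
        FreeGroup.mk [(bl m', e)] * (FreeGroup.of (zl m') ^ rho m' n R i e)⁻¹ := by
  have hS : S m' n R i = FreeGroup.of (zl m') ^ qq m' n R i * FreeGroup.of (bl m') *
      (FreeGroup.of (zl m') ^ qq' m' n R i)⁻¹ := dif_neg (by omega)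
  cases e
  · rw [mk_singleton, mk_singleton]
    simp only [Bool.false_eq_true, if_false, map_inv, FreeGroup.lift_apply_of, hS, lam, rho]
    group
  · rw [mk_singleton, mk_singleton]
    simp only [if_true, FreeGroup.lift_apply_of, hS, lam, rho]


theorem mem_of_mem_getLast?' {β : Type*} {l : List β} {a : β} (h : a ∈ l.getLast?) : a ∈ l := by
  obtain ⟨h1, rfl⟩ := List.mem_getLast?_eq_getLast h
  exact List.getLast_mem h1

theorem main_basis (w : List (Fin n × Bool)) (hred : IsRed w) (hlen : w.length ≤ R)
    (hbasis : ∀ l ∈ w, l.1.1 < m' + 1)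
    (ρp : ℕ) (hcase : ρp = 0 ∨ Nb R ≤ ρp) :
    ∃ M, ((FreeGroup.of (zl m') ^ ρp)⁻¹ *
        FreeGroup.lift (S m' n R) (FreeGroup.mk w)).toWord = M
      ∧ (M = [] → (w = [] ∧ ρp = 0))
      ∧ (Nb R ≤ ρp → ∃ σ M', M = (zl m', σ) :: M') := by
  rw [lift_basis m' n R w hbasis]
  have hv'red : IsRed (w.map (gmap m' n)) := isRed_gmap m' n w hbasis hred
  obtain ⟨a, D, hsplit, hD⟩ := split_lead ((zl m', true) : Fin (m' + 2) × Bool) (w.map (gmap m' n))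
  have hlena : a + D.length = w.length := by
    have := congrArg List.length hsplit
    simp at this
    omega
  have hlead := lead (zl m') ρp a D (by rw [← hsplit]; exact hv'red) hD
  rw [← hsplit] at hlead
  refine ⟨_, hlead, ?_, ?_⟩
  · intro hnil
    have hnl := congrArg List.length hnil
    simp only [List.length_append, List.length_replicate, List.length_nil] at hnl
    rcases hcase with h0 | hN
    · subst h0
      have ha : a = 0 := by omega
      have hD0 : D = [] := by
        rw [← List.length_eq_zero_iff]; omega
      have : w.map (gmap m' n) = [] := by rw [hsplit, ha, hD0]; rfl
      exact ⟨List.map_eq_nil_iff.mp this, rfl⟩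
    · exfalso
      have : Nb R = R + 1 := rfl
      omega
  · intro hNρ
    have hNb : Nb R = R + 1 := rfl
    have ha0 : a - ρp = 0 := by omega
    obtain ⟨e, he⟩ : ∃ e, ρp - a = e + 1 := ⟨ρp - a - 1, by omega⟩
    refine ⟨false, List.replicate e (zl m', false) ++ D, ?_⟩
    rw [ha0, he]
    simp [List.replicate_succ]

theorem main (len : ℕ) :
    ∀ w : List (Fin n × Bool), w.length ≤ len → IsRed w → w.length ≤ R →
    ∀ ρp : ℕ, Nb R ∣ ρp → (ρp = 0 ∨ Nb R ≤ ρp) →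
    (∀ i e w'', w = (i, e) :: w'' → m' + 1 ≤ i.1 → ρp ≠ lam m' n R i e) →
    ∃ M, ((FreeGroup.of (zl m') ^ ρp)⁻¹ *
        FreeGroup.lift (S m' n R) (FreeGroup.mk w)).toWord = M
      ∧ (M = [] → (w = [] ∧ ρp = 0))
      ∧ (Nb R ≤ ρp → ∃ σ M', M = (zl m', σ) :: M') := by
  induction len with
  | zero =>
    intro w hwlen hred hlen ρp hdvd hcase hcompat
    have hw0 : w = [] := by rw [← List.length_eq_zero_iff]; omega
    subst hw0
    exact main_basis m' n R [] hred hlen (by simp) ρp hcase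
  | succ len ih =>
    intro w hwlen hred hlen ρp hdvd hcase hcompat
    rcases split_block m' n w with hbasis | ⟨v, x, w', hw, hv, hx⟩
    · exact main_basis m' n R w hred hlen hbasis ρp hcase
    · obtain ⟨i, e⟩ := x
      subst hw
      have hxi : m' + 1 ≤ i.1 := hx
      have hNb : Nb R = R + 1 := rfl
      have hlenw : v.length + (w'.length + 1) = (v ++ (i, e) :: w').length := by simp
      -- decompose the lift
      have hmk : FreeGroup.mk (v ++ (i, e) :: w')
          = FreeGroup.mk v * FreeGroup.mk [(i, e)] * FreeGroup.mk w' := by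
        rw [FreeGroup.mul_mk, FreeGroup.mul_mk]
        simp
      rw [hmk, map_mul, map_mul, lift_basis m' n R v hv, lift_block m' n R i e hx]
      have hre : (FreeGroup.of (zl m') ^ ρp)⁻¹ *
          (FreeGroup.mk (v.map (gmap m' n)) *
            (FreeGroup.of (zl m') ^ lam m' n R i e * FreeGroup.mk [(bl m', e)] *
              (FreeGroup.of (zl m') ^ rho m' n R i e)⁻¹) *
            FreeGroup.lift (S m' n R) (FreeGroup.mk w'))
          = ((FreeGroup.of (zl m') ^ ρp)⁻¹ * FreeGroup.mk (v.map (gmap m' n)) *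
              FreeGroup.of (zl m') ^ lam m' n R i e) * FreeGroup.mk [(bl m', e)] *
            ((FreeGroup.of (zl m') ^ rho m' n R i e)⁻¹ *
              FreeGroup.lift (S m' n R) (FreeGroup.mk w')) := by
        group
      rw [hre]
      -- the h-syllable
      have hdvdlam : Nb R ∣ lam m' n R i e := by
        unfold lam qq qq'
        cases e <;> simp <;> exact Dvd.intro _ rfl
      have hlamge : Nb R ≤ lam m' n R i e := by
        unfold lam qq qq'
        cases e <;> simp <;> exact Nat.le_mul_of_pos_right _ (by omega)
      have hcompat' : ¬(v.map (gmap m' n) = [] ∧ ρp = lam m' n R i e) := by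
        intro ⟨h1, h2⟩
        have hv0 : v = [] := List.map_eq_nil_iff.mp h1
        exact hcompat i e w' (by rw [hv0]; rfl) hx h2
      obtain ⟨Mh, hMh, hMhne, hMhlet, hMhhead⟩ :=
        hword (zl m') (Nb R) ρp (lam m' n R i e) (v.map (gmap m' n))
          (isRed_gmap m' n v hv hred.append_left)
          (by rw [List.length_map]; omega) hdvd hdvdlam hlamge hcompat'
      -- the inductive part
      have hw'red : IsRed w' := (hred.append_right).tail
      have hadj : ∀ i' e' w'', w' = (i', e') :: w'' → m' + 1 ≤ i'.1 →
          rho m' n R i e ≠ lam m' n R i' e' := by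
        intro i' e' w'' hw'' hblk
        have h5 : IsRed ((i, e) :: (i', e') :: w'') := by
          rw [← hw'']
          exact hred.append_right
        have hrel := (List.isChain_cons_cons.mp h5).1
        have hNbpos : 0 < Nb R := by omega
        have hjj : jj m' n i = jj m' n i' → i = i' := by
          intro hj
          apply Fin.ext
          unfold jj at hj
          omega
        unfold rho lam qq qq'
        cases e <;> cases e' <;> simp only [if_true, if_false, Bool.false_eq_true] <;> intro hcon
        · -- e = false, e' = false : qq i = qq' i' : parity
          have := Nat.eq_of_mul_eq_mul_left hNbpos hcon
          omega
        · -- e = false, e' = true : qq i = qq i'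
          have := Nat.eq_of_mul_eq_mul_left hNbpos hcon
          have hii : i = i' := hjj (by omega)
          exact hrel ⟨by rw [hii], by simp⟩
        · -- e = true, e' = false : qq' i = qq' i'
          have := Nat.eq_of_mul_eq_mul_left hNbpos hcon
          have hii : i = i' := hjj (by omega)
          exact hrel ⟨by rw [hii], by simp⟩
        · -- e = true, e' = true : qq' i = qq i'
          have := Nat.eq_of_mul_eq_mul_left hNbpos hcon
          omega
      have hdvdrho : Nb R ∣ rho m' n R i e := by
        unfold rho qq qq'
        cases e <;> simp <;> exact Dvd.intro _ rfl
      have hrhoge : Nb R ≤ rho m' n R i e := by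
        unfold rho qq qq'
        cases e <;> simp <;> exact Nat.le_mul_of_pos_right _ (by omega)
      obtain ⟨M', hM', hM'ne, hM'head⟩ :=
        ih w' (by omega) hw'red (by omega) (rho m' n R i e) hdvdrho (Or.inr hrhoge) hadj
      obtain ⟨σ', M'', hM''⟩ := hM'head hrhoge
      -- assemble
      have hh : (FreeGroup.of (zl m') ^ ρp)⁻¹ * FreeGroup.mk (v.map (gmap m' n)) *
          FreeGroup.of (zl m') ^ lam m' n R i e = FreeGroup.mk Mh := by
        rw [← hMh, FreeGroup.mk_toWord]
      have hg' : (FreeGroup.of (zl m') ^ rho m' n R i e)⁻¹ *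
          FreeGroup.lift (S m' n R) (FreeGroup.mk w') = FreeGroup.mk M' := by
        rw [← hM', FreeGroup.mk_toWord]
      rw [hh, hg', FreeGroup.mul_mk, FreeGroup.mul_mk, List.append_assoc,
        List.singleton_append]
      have hfinal : IsRed (Mh ++ (bl m', e) :: M') := by
        rw [show (IsRed (Mh ++ (bl m', e) :: M')) = List.IsChain
          (fun a b => ¬(a.1 = b.1 ∧ a.2 = !b.2)) (Mh ++ (bl m', e) :: M') from rfl,
          List.isChain_append]
        refine ⟨by rw [← hMh]; exact isRed_toWord _, ?_, ?_⟩
        · rw [hM'']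
          refine List.isChain_cons_cons.mpr ⟨?_, ?_⟩
          · intro ⟨h1, _⟩
            exact zl_ne_bl m' h1.symm
          · rw [← hM'']
            rw [← hM']
            exact isRed_toWord _
        · intro x hx y hy
          simp only [List.head?_cons, Option.mem_def, Option.some_inj] at hy
          subst hy
          intro ⟨h1, _⟩
          rcases hMhlet x (mem_of_mem_getLast?' hx) with hz | hvmem
          · exact zl_ne_bl m' (by rw [← hz]; exact h1)
          · obtain ⟨l0, hl0, rfl⟩ := List.mem_map.mp hvmem
            exact gmap_fst_ne_bl m' n l0 (hv l0 hl0) h1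
      refine ⟨_, hfinal.toWord_mk, ?_, ?_⟩
      · intro hnil
        exact absurd hnil (by simp [hMhne])
      · intro hNρ
        obtain ⟨σ, Mh', hMh'⟩ := hMhhead hNρ
        exact ⟨σ, Mh' ++ (bl m', e) :: M', by rw [hMh']; simp⟩


theorem S_basis_eq (i : Fin n) (h : i.1 < m' + 1) (hb : i.1 < m' + 2) :
    S m' n R i = FreeGroup.of ⟨i.1, hb⟩ := dif_pos h

theorem S_block_eq (i : Fin n) (h : ¬ i.1 < m' + 1) :
    S m' n R i = FreeGroup.of (zl m') ^ qq m' n R i * FreeGroup.of (bl m') *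
      (FreeGroup.of (zl m') ^ qq' m' n R i)⁻¹ := dif_neg h

theorem S_generates (hn : m' + 2 ≤ n) :
    Subgroup.closure (Set.range (S m' n R)) = ⊤ := by
  rw [eq_top_iff, ← FreeGroup.closure_range_of (Fin (m' + 2)), Subgroup.closure_le]
  rintro _ ⟨a, rfl⟩
  set K := Subgroup.closure (Set.range (S m' n R)) with hK
  have hmem : ∀ i : Fin n, S m' n R i ∈ K := fun i =>
    Subgroup.subset_closure ⟨i, rfl⟩
  have h0n : 0 < n := by omega
  have hz : FreeGroup.of (zl m') ∈ K := by
    have h1 : S m' n R ⟨0, h0n⟩ = FreeGroup.of ⟨0, Nat.succ_pos _⟩ :=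
      S_basis_eq m' n R ⟨0, h0n⟩ (Nat.succ_pos _) (Nat.succ_pos _)
    have h2 : (⟨0, Nat.succ_pos _⟩ : Fin (m' + 2)) = zl m' := rfl
    rw [h2] at h1
    rw [← h1]
    exact hmem _
  by_cases ha : a.1 < m' + 1
  · have han : a.1 < n := by omega
    have h1 : S m' n R ⟨a.1, han⟩ = FreeGroup.of ⟨a.1, a.2⟩ :=
      S_basis_eq m' n R ⟨a.1, han⟩ ha a.2
    have h2 : (⟨a.1, a.2⟩ : Fin (m' + 2)) = a := Fin.ext rfl
    rw [h2] at h1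
    rw [← h1]
    exact hmem _
  · have hab : a = bl m' := by
      apply Fin.ext
      have := a.2
      show a.1 = m' + 1
      omega
    have hmn : m' + 1 < n := by omega
    set i₁ : Fin n := ⟨m' + 1, hmn⟩ with hi₁
    have hS : S m' n R i₁ = FreeGroup.of (zl m') ^ qq m' n R i₁ * FreeGroup.of (bl m') *
        (FreeGroup.of (zl m') ^ qq' m' n R i₁)⁻¹ := S_block_eq m' n R i₁ (by simp [hi₁])
    have hbl : FreeGroup.of (bl m') =
        (FreeGroup.of (zl m') ^ qq m' n R i₁)⁻¹ * S m' n R i₁ *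
          FreeGroup.of (zl m') ^ qq' m' n R i₁ := by
      rw [hS]
      group
    rw [hab, hbl]
    exact mul_mem (mul_mem (inv_mem (pow_mem hz _)) (hmem i₁)) (pow_mem hz _)

theorem S_ball_free (w : FreeGroup (Fin n)) (hw : (FreeGroup.toWord w).length ≤ R)
    (h1 : FreeGroup.lift (S m' n R) w = 1) : w = 1 := by
  have hred : IsRed (FreeGroup.toWord w) := isRed_toWord w
  obtain ⟨M, hM, hMnil, -⟩ := main m' n R (FreeGroup.toWord w).length (FreeGroup.toWord w)
    le_rfl hred hw 0 (dvd_zero _) (Or.inl rfl)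
    (by
      intro i e w'' hw'' hblk
      unfold lam qq qq' Nb
      cases e <;> simp <;> positivity)
  rw [FreeGroup.mk_toWord] at hM
  rw [h1] at hM
  simp only [pow_zero, inv_one, one_mul, FreeGroup.toWord_one] at hM
  have := hMnil hM.symm
  rw [← FreeGroup.toWord_eq_nil_iff]
  exact this.1

/-- Direction 1 of the theorem. -/
theorem preforms_of_le (hn : m' + 2 ≤ n) :
    Preforms (FreeGroup (Fin (m' + 2))) (FreeGroup (Fin n)) := by
  refine ⟨n, FreeGroup.of, FreeGroup.closure_range_of _, ?_⟩
  intro R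
  refine ⟨S m' n R, S_generates m' n R hn, ?_⟩
  intro w hw
  rw [FreeGroup.lift_of_eq_id, MonoidHom.id_apply]
  constructor
  · exact S_ball_free m' n R w hw
  · rintro rfl
    exact map_one _

end Construction

/-! ### Converse direction -/

theorem span_eq_top_of_surj {m n : ℕ} (ψ : FreeGroup (Fin n) →* FreeGroup (Fin m))
    (hψ : Function.Surjective ψ) :
    Submodule.span ℤ (Set.range fun j : Fin n =>
      Multiplicative.toAdd (FreeGroup.lift
        (fun a : Fin m => Multiplicative.ofAdd (Pi.single a (1 : ℤ)))
        (ψ (FreeGroup.of j)))) = ⊤ := by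
  set χ : FreeGroup (Fin m) →* Multiplicative (Fin m → ℤ) :=
    FreeGroup.lift (fun a : Fin m => Multiplicative.ofAdd (Pi.single a (1 : ℤ))) with hχ
  set g : Fin n → (Fin m → ℤ) := fun j => Multiplicative.toAdd (χ (ψ (FreeGroup.of j))) with hg
  rw [eq_top_iff]
  intro y _
  -- every value toAdd (χ (ψ x)) lies in the span
  have key : ∀ x : FreeGroup (Fin n),
      Multiplicative.toAdd (χ (ψ x)) ∈ Submodule.span ℤ (Set.range g) := by
    intro x
    induction x using FreeGroup.induction_on with
    | C1 => simp
    | of j => exact Submodule.subset_span ⟨j, rfl⟩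
    | inv_of j hj =>
      rw [map_inv, map_inv]
      simpa using Submodule.neg_mem _ hj
    | mul x y hx hy =>
      rw [map_mul, map_mul]
      exact Submodule.add_mem _ hx hy
  -- construct a preimage of y
  have hone : ∀ i : Fin m, χ (FreeGroup.of i ^ (y i)) =
      Multiplicative.ofAdd (Pi.single i (y i)) := by
    intro i
    rw [map_zpow, hχ, FreeGroup.lift_apply_of]
    rw [← ofAdd_zsmul]
    congr 1
    ext j
    simp [Pi.single_apply, mul_ite]
  have hχval : χ ((List.ofFn (fun i : Fin m => FreeGroup.of i ^ (y i))).prod)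
      = Multiplicative.ofAdd y := by
    rw [map_list_prod, List.map_ofFn, List.prod_ofFn]
    simp only [Function.comp_apply, hone]
    rw [← ofAdd_sum]
    congr 1
    exact Finset.univ_sum_single y
  obtain ⟨x, hx⟩ := hψ ((List.ofFn (fun i : Fin m => FreeGroup.of i ^ (y i))).prod)
  have := key x
  rw [hx, hχval] at this
  simpa using this

theorem le_of_preforms {m n : ℕ}
    (hP : Preforms (FreeGroup (Fin m)) (FreeGroup (Fin n))) : m ≤ n := by
  obtain ⟨k, t, htop, hs⟩ := hP
  have hsurj : Function.Surjective (FreeGroup.lift t) := by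
    rw [← MonoidHom.range_eq_top, FreeGroup.range_lift_eq_closure, htop]
  set v : Fin n → FreeGroup (Fin k) := fun j => Function.surjInv hsurj (FreeGroup.of j) with hv
  set θ : FreeGroup (Fin n) →* FreeGroup (Fin k) := FreeGroup.lift v with hθ
  have hretr : ∀ x : FreeGroup (Fin n), FreeGroup.lift t (θ x) = x := by
    intro x
    have : (FreeGroup.lift t).comp θ = MonoidHom.id _ := by
      apply FreeGroup.ext_hom
      intro a
      simp [hθ, hv, Function.surjInv_eq hsurj]
    calc FreeGroup.lift t (θ x) = ((FreeGroup.lift t).comp θ) x := rfl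
      _ = x := by rw [this]; rfl
  set c : Fin k → FreeGroup (Fin k) := fun i => (FreeGroup.of i)⁻¹ * θ (t i) with hc
  have hct : ∀ i, FreeGroup.lift t (c i) = 1 := by
    intro i
    rw [hc]
    simp only [map_mul, map_inv, FreeGroup.lift_apply_of, hretr]
    group
  set R : ℕ := Finset.univ.sup (fun i : Fin k => (FreeGroup.toWord (c i)).length) with hR
  obtain ⟨s, hstop, hiff⟩ := hs R
  have hsc : ∀ i, FreeGroup.lift s (c i) = 1 := by
    intro i
    rw [hiff (c i) (Finset.le_sup (f := fun i : Fin k => (FreeGroup.toWord (c i)).length) (Finset.mem_univ i))]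
    exact hct i
  set ψ : FreeGroup (Fin n) →* FreeGroup (Fin m) := (FreeGroup.lift s).comp θ with hψ
  have hψt : ∀ i, ψ (t i) = s i := by
    intro i
    have := hsc i
    rw [hc] at this
    simp only [map_mul, map_inv, FreeGroup.lift_apply_of] at this
    have h2 := congrArg (fun w => s i * w) this
    simp only [mul_one] at h2
    rw [← mul_assoc, mul_inv_cancel, one_mul] at h2
    exact h2
  have hψsurj : Function.Surjective ψ := by
    rw [← MonoidHom.range_eq_top, eq_top_iff, ← hstop, Subgroup.closure_le]
    rintro _ ⟨i, rfl⟩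
    exact ⟨t i, hψt i⟩
  -- pass to abelianizations over ℤ
  have hspan := span_eq_top_of_surj ψ hψsurj
  set g : Fin n → (Fin m → ℤ) := fun j =>
    Multiplicative.toAdd (FreeGroup.lift
      (fun a : Fin m => Multiplicative.ofAdd (Pi.single a (1 : ℤ)))
      (ψ (FreeGroup.of j))) with hg
  have hrange : LinearMap.range (Fintype.linearCombination ℤ g) = ⊤ := by
    rw [Fintype.range_linearCombination]
    exact hspan
  have h1 : Module.finrank ℤ (Fin m → ℤ) = m := by
    rw [Module.finrank_pi]
    simp
  have h2 : Module.finrank ℤ (Fin n → ℤ) = n := by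
    rw [Module.finrank_pi]
    simp
  have h3 := LinearMap.finrank_range_le (Fintype.linearCombination ℤ g)
  rw [hrange, finrank_top, h1, h2] at h3
  exact h3

end FG

/-- If `2 ≤ m ≤ n` then `F_m ⊑ F_n`; conversely, for `m, n ≥ 1`, if `F_m ⊑ F_n` then
`m ≤ n`. -/
theorem free_preforms_free (m n : ℕ) :
    (2 ≤ m → m ≤ n → Preforms (FreeGroup (Fin m)) (FreeGroup (Fin n))) ∧
    (1 ≤ m → 1 ≤ n → Preforms (FreeGroup (Fin m)) (FreeGroup (Fin n)) → m ≤ n) := by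
  constructor
  · intro hm hmn
    obtain ⟨m', rfl⟩ : ∃ m', m = m' + 2 := ⟨m - 2, by omega⟩
    exact FG.preforms_of_le m' n (by omega)
  · intro _ _ hP
    exact FG.le_of_preforms hP
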